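/- Under the memoryless action-dependent source setup, suppose in addition that T = g(X^n) for a deterministic map g : 𝒳^n → 𝒯 (𝒯 finite) and that A^n = h(T) for a deterministic map h : 𝒯 → 𝒜^n (so A^n is a function of X^n through T). Then H(T) + H(X^n | Y^n, T) ≥ Σ_{i=1}^n [ I(X_i ; A_i) + H(X_i | A_i, Y_i) ]. -/

import Mathlib

open Finset

/-- Probability that the random variable `X` takes the value `s`, under the pmf `p`. -/
noncomputable def probOf {Ω S : Type*} [Fintype Ω] [DecidableEq S]
    (p : Ω → ℝ) (X : Ω → S) (s : S) : ℝ :=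
  ∑ ω : Ω, if X ω = s then p ω else 0

/-- Base-2 Shannon entropy of the random variable `X` under the pmf `p`. -/
noncomputable def ent {Ω S : Type*} [Fintype Ω] [Fintype S] [DecidableEq S]
    (p : Ω → ℝ) (X : Ω → S) : ℝ :=
  ∑ s : S, Real.negMulLog (probOf p X s) / Real.log 2

/-- Conditional entropy `H(X | Y)` (base 2). -/
noncomputable def condEnt {Ω S T : Type*} [Fintype Ω] [Fintype S] [Fintype T]
    [DecidableEq S] [DecidableEq T] (p : Ω → ℝ) (X : Ω → S) (Y : Ω → T) : ℝ :=
  ent p (fun ω => (X ω, Y ω)) - ent p Y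

/-- Mutual information `I(X ; Y)` (base 2). -/
noncomputable def mutInfo {Ω S T : Type*} [Fintype Ω] [Fintype S] [Fintype T]
    [DecidableEq S] [DecidableEq T] (p : Ω → ℝ) (X : Ω → S) (Y : Ω → T) : ℝ :=
  ent p X + ent p Y - ent p (fun ω => (X ω, Y ω))

/-- Joint pmf of `(X^n, Y^n)` in the memoryless action-dependent source setup:
`X^n` i.i.d. `∼ μ`, `A^n = f X^n`, and conditionally on `X^n = x^n` the coordinates of `Y^n`
are independent with `Y_i ∼ W (x_i) (f x^n i)`. -/
noncomputable def jointPmf {n : ℕ} {𝒳 𝒜 𝒴 : Type*}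
    (μ : 𝒳 → ℝ) (f : (Fin n → 𝒳) → (Fin n → 𝒜)) (W : 𝒳 → 𝒜 → 𝒴 → ℝ) :
    (Fin n → 𝒳) × (Fin n → 𝒴) → ℝ :=
  fun ω => (∏ i, μ (ω.1 i)) * ∏ i, W (ω.1 i) (f ω.1 i) (ω.2 i)


set_option linter.unusedSectionVars false
noncomputable def entNat {Ω S : Type*} [Fintype Ω] [Fintype S] [DecidableEq S]
    (p : Ω → ℝ) (X : Ω → S) : ℝ :=
  ∑ s : S, Real.negMulLog (probOf p X s)

section general
variable {Ω S T : Type*} [Fintype Ω] [Fintype S] [Fintype T] [DecidableEq S] [DecidableEq T]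
  {p : Ω → ℝ} {X : Ω → S}

lemma sum_probOf_mul (p : Ω → ℝ) (X : Ω → S) (φ : S → ℝ) :
    ∑ s, probOf p X s * φ s = ∑ ω, p ω * φ (X ω) := by
  unfold probOf
  simp_rw [Finset.sum_mul, ite_mul, zero_mul]
  rw [Finset.sum_comm]
  apply Finset.sum_congr rfl; intro ω _
  simp

lemma probOf_nonneg (hp0 : ∀ ω, 0 ≤ p ω) (s : S) : 0 ≤ probOf p X s := by
  apply Finset.sum_nonneg; intro ω _; split <;> simp [hp0 ω]

lemma le_probOf (hp0 : ∀ ω, 0 ≤ p ω) (ω : Ω) : p ω ≤ probOf p X (X ω) := by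
  unfold probOf
  have := Finset.single_le_sum (f := fun ω' => if X ω' = X ω then p ω' else 0)
    (fun ω' _ => by split; exacts [hp0 ω', le_rfl]) (Finset.mem_univ ω)
  simpa using this

lemma sum_probOf (p : Ω → ℝ) (X : Ω → S) : ∑ s, probOf p X s = ∑ ω, p ω := by
  have := sum_probOf_mul p X (fun _ => 1); simpa using this

lemma entNat_comp_injective (p : Ω → ℝ) (X : Ω → S) (ψ : S → T) (hψ : Function.Injective ψ) :
    entNat p (fun ω => ψ (X ω)) = entNat p X := by
  unfold entNat
  calc ∑ t : T, Real.negMulLog (probOf p (fun ω => ψ (X ω)) t)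
      = ∑ t ∈ Finset.univ.image ψ, Real.negMulLog (probOf p (fun ω => ψ (X ω)) t) := by
        symm; apply Finset.sum_subset (Finset.subset_univ _)
        intro t _ ht
        have hz : probOf p (fun ω => ψ (X ω)) t = 0 := Finset.sum_eq_zero fun ω _ => by
          have : ψ (X ω) ≠ t := fun hh => ht (Finset.mem_image.2 ⟨X ω, Finset.mem_univ _, hh⟩)
          simp [this]
        simp [hz]
    _ = ∑ s : S, Real.negMulLog (probOf p (fun ω => ψ (X ω)) (ψ s)) :=
        Finset.sum_image (fun a _ b _ hab => hψ hab)
    _ = ∑ s : S, Real.negMulLog (probOf p X s) := by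
        apply Finset.sum_congr rfl; intro s _; congr 1
        apply Finset.sum_congr rfl; intro ω _; simp [hψ.eq_iff]

lemma gibbs (hp0 : ∀ ω, 0 ≤ p ω) (hp1 : ∑ ω, p ω = 1) (X : Ω → S) (q : S → ℝ)
    (hq0 : ∀ s, 0 ≤ q s) (hq1 : ∑ s, q s ≤ 1) (hpq : ∀ ω, 0 < p ω → 0 < q (X ω)) :
    entNat p X ≤ -∑ ω, p ω * Real.log (q (X ω)) := by
  rw [← sum_probOf_mul p X (fun s => Real.log (q s))]
  have hP0 : ∀ s, 0 ≤ probOf p X s := fun s => probOf_nonneg hp0 s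
  have hPq : ∀ s : S, 0 < probOf p X s → 0 < q s := by
    intro s hs
    by_contra hqs
    -- then all contributions to probOf must be ≤ 0? no: find ω with p ω > 0 and X ω = s
    have : ∃ ω, X ω = s ∧ 0 < p ω := by
      by_contra hno
      push_neg at hno
      have : probOf p X s ≤ 0 := by
        apply Finset.sum_nonpos
        intro ω _
        split
        · rename_i hXω
          exact le_of_not_gt fun hp => (by linarith [hno ω hXω])
        · exact le_refl 0
      linarith
    obtain ⟨ω, hXω, hpω⟩ := this
    exact hqs (hXω ▸ hpq ω hpω)
  have key : ∀ s : S, Real.negMulLog (probOf p X s) + probOf p X s * Real.log (q s)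
      ≤ (if 0 < probOf p X s then q s - probOf p X s else 0) := by
    intro s
    by_cases hs : 0 < probOf p X s
    · have hq : 0 < q s := hPq s hs
      rw [if_pos hs, Real.negMulLog]
      have : Real.log (q s) - Real.log (probOf p X s) = Real.log (q s / probOf p X s) :=
        (Real.log_div (ne_of_gt hq) (ne_of_gt hs)).symm
      have hle : Real.log (q s / probOf p X s) ≤ q s / probOf p X s - 1 :=
        Real.log_le_sub_one_of_pos (div_pos hq hs)
      nlinarith [mul_le_mul_of_nonneg_left hle (le_of_lt hs),
        mul_div_cancel₀ (q s) (ne_of_gt hs)]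
    · have : probOf p X s = 0 := le_antisymm (not_lt.1 hs) (hP0 s)
      simp [this]
  have hsum := Finset.sum_le_sum (s := (Finset.univ : Finset S))
    (f := fun s => Real.negMulLog (probOf p X s) + probOf p X s * Real.log (q s))
    (g := fun s => if 0 < probOf p X s then q s - probOf p X s else 0)
    (fun s _ => key s)
  rw [Finset.sum_add_distrib] at hsum
  have h2 : ∑ s, (if 0 < probOf p X s then q s - probOf p X s else 0) ≤ 0 := by
    have e1 : ∑ s, (if 0 < probOf p X s then q s - probOf p X s else 0)
        = ∑ s, (if 0 < probOf p X s then q s else 0) - ∑ s, (if 0 < probOf p X s then probOf p X s else 0) := by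
      rw [← Finset.sum_sub_distrib]
      apply Finset.sum_congr rfl; intro s _; split <;> simp
    have e2 : ∑ s, (if 0 < probOf p X s then q s else 0) ≤ ∑ s, q s :=
      Finset.sum_le_sum (fun s _ => by split <;> simp [hq0 s])
    have e3 : ∑ s, (if 0 < probOf p X s then probOf p X s else 0) = ∑ s, probOf p X s := by
      apply Finset.sum_congr rfl; intro s _
      split
      · rfl
      · rename_i hs; simp [le_antisymm (not_lt.1 hs) (hP0 s)]
    rw [e1, e3, sum_probOf, hp1]
    linarith
  unfold entNat
  linarith

lemma negMulLog_prod {κ : Type*} (s : Finset κ) (c : κ → ℝ) :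
    Real.negMulLog (∏ k ∈ s, c k) = -∑ k ∈ s, (∏ j ∈ s, c j) * Real.log (c k) := by
  by_cases hz : ∏ k ∈ s, c k = 0
  · rw [hz]
    simp only [Real.negMulLog_zero, hz, zero_mul, Finset.sum_const_zero, neg_zero]
  · rw [Real.negMulLog, Real.log_prod (s := s) (f := c) (fun k _ hk => hz (Finset.prod_eq_zero ‹k ∈ s› hk)) ]
    rw [neg_mul, Finset.mul_sum, neg_inj]

end general

set_option linter.unusedSectionVars false

section pi
variable {ι 𝒵 : Type*} [Fintype ι] [DecidableEq ι] [Fintype 𝒵]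

lemma sum_pi_prod (V : ι → 𝒵 → ℝ) :
    ∑ g : ι → 𝒵, ∏ j, V j (g j) = ∏ j, ∑ z, V j z := by
  rw [Finset.prod_univ_sum]
  simp [Fintype.piFinset_univ]

lemma sum_pi_prod_eq_one (V : ι → 𝒵 → ℝ) (hV : ∀ j, ∑ z, V j z = 1) :
    ∑ g : ι → 𝒵, ∏ j, V j (g j) = 1 := by
  rw [sum_pi_prod]; simp [hV]

lemma sum_pi_prod_ite [DecidableEq 𝒵] (V : ι → 𝒵 → ℝ) (hV : ∀ j, ∑ z, V j z = 1)
    (i : ι) (y : 𝒵) :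
    ∑ g : ι → 𝒵, (if g i = y then ∏ j, V j (g j) else 0) = V i y := by
  have key : ∀ g : ι → 𝒵, (if g i = y then ∏ j, V j (g j) else 0)
      = ∏ j, (if j = i then (if g j = y then V j (g j) else 0) else V j (g j)) := by
    intro g
    by_cases hg : g i = y
    · rw [if_pos hg]
      apply Finset.prod_congr rfl
      intro j _
      by_cases hj : j = i
      · subst hj; simp [hg]
      · simp [hj]
    · rw [if_neg hg]
      symm
      apply Finset.prod_eq_zero (Finset.mem_univ i)
      simp [hg]
  simp_rw [key]
  rw [sum_pi_prod (fun j z => if j = i then (if z = y then V j z else 0) else V j z)]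
  rw [Finset.prod_eq_single i]
  · simp
  · intro j _ hj
    simp [hj, hV j]
  · simp

end pi

section joint
variable {n : ℕ} {𝒳 𝒜 𝒴 : Type*}
    [Fintype 𝒳] [DecidableEq 𝒳] [Fintype 𝒜] [DecidableEq 𝒜] [Fintype 𝒴] [DecidableEq 𝒴]
    (μ : 𝒳 → ℝ) (f : (Fin n → 𝒳) → (Fin n → 𝒜)) (W : 𝒳 → 𝒜 → 𝒴 → ℝ)

lemma jointPmf_nonneg (hμ0 : ∀ x, 0 ≤ μ x) (hW0 : ∀ x a y, 0 ≤ W x a y) (ω) :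
    0 ≤ jointPmf μ f W ω :=
  mul_nonneg (Finset.prod_nonneg fun _ _ => hμ0 _) (Finset.prod_nonneg fun _ _ => hW0 _ _ _)

lemma sum_jointPmf (hμ1 : ∑ x, μ x = 1) (hW1 : ∀ x a, ∑ y, W x a y = 1) :
    ∑ ω, jointPmf μ f W ω = 1 := by
  rw [Fintype.sum_prod_type]
  have h1 : ∀ x : Fin n → 𝒳, ∑ y : Fin n → 𝒴, jointPmf μ f W (x, y) = ∏ i, μ (x i) := by
    intro x
    unfold jointPmf
    dsimp only
    rw [← Finset.mul_sum,
      sum_pi_prod_eq_one (fun i y => W (x i) (f x i) y) (fun i => hW1 _ _), mul_one]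
  simp_rw [h1]
  exact sum_pi_prod_eq_one (fun _ x => μ x) (fun _ => hμ1)

lemma probOf_coord (hμ1 : ∑ x, μ x = 1) (hW1 : ∀ x a, ∑ y, W x a y = 1) (i : Fin n) (x : 𝒳) :
    probOf (jointPmf μ f W) (fun ω => ω.1 i) x = μ x := by
  unfold probOf jointPmf
  rw [Fintype.sum_prod_type]
  have h1 : ∀ xs : Fin n → 𝒳,
      (∑ ys : Fin n → 𝒴, if xs i = x then (∏ j, μ (xs j)) * ∏ j, W (xs j) (f xs j) (ys j) else 0)
      = if xs i = x then ∏ j, μ (xs j) else 0 := by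
    intro xs
    by_cases hxs : xs i = x
    · simp only [hxs, if_true]
      rw [← Finset.mul_sum,
        sum_pi_prod_eq_one (fun j y => W (xs j) (f xs j) y) (fun j => hW1 _ _), mul_one]
    · simp [hxs]
  simp_rw [h1]
  exact sum_pi_prod_ite (fun j z => μ z) (fun j => hμ1) i x

lemma probOf_triple (hW1 : ∀ x a, ∑ y, W x a y = 1) (i : Fin n) (x : 𝒳) (a : 𝒜) (y : 𝒴) :
    probOf (jointPmf μ f W) (fun ω => ((ω.1 i, f ω.1 i), ω.2 i)) ((x, a), y)
      = probOf (jointPmf μ f W) (fun ω => (ω.1 i, f ω.1 i)) (x, a) * W x a y := by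
  unfold probOf jointPmf
  rw [Fintype.sum_prod_type, Fintype.sum_prod_type, Finset.sum_mul]
  apply Finset.sum_congr rfl
  intro xs _
  by_cases hc : xs i = x ∧ f xs i = a
  · obtain ⟨h1, h2⟩ := hc
    have eL : ∀ ys : Fin n → 𝒴,
        (if ((xs i, f xs i), ys i) = ((x, a), y)
          then (∏ j, μ (xs j)) * ∏ j, W (xs j) (f xs j) (ys j) else 0)
        = (∏ j, μ (xs j)) * (if ys i = y then ∏ j, W (xs j) (f xs j) (ys j) else 0) := by
      intro ys
      simp [Prod.ext_iff, h1, h2, mul_ite]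
    have eR : ∀ ys : Fin n → 𝒴,
        (if (xs i, f xs i) = (x, a)
          then (∏ j, μ (xs j)) * ∏ j, W (xs j) (f xs j) (ys j) else 0)
        = (∏ j, μ (xs j)) * ∏ j, W (xs j) (f xs j) (ys j) := by
      intro ys
      simp [Prod.ext_iff, h1, h2]
    rw [Finset.sum_congr rfl (fun ys _ => eL ys), Finset.sum_congr rfl (fun ys _ => eR ys),
      ← Finset.mul_sum, ← Finset.mul_sum,
      sum_pi_prod_ite (fun j z => W (xs j) (f xs j) z) (fun j => hW1 _ _) i y,
      sum_pi_prod_eq_one (fun j z => W (xs j) (f xs j) z) (fun j => hW1 _ _), h1, h2]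
    ring
  · rw [Finset.sum_eq_zero, Finset.sum_eq_zero, zero_mul]
    · intro ys _
      apply if_neg
      simp only [Prod.mk.injEq, not_and]
      tauto
    · intro ys _
      apply if_neg
      simp only [Prod.mk.injEq, not_and]
      tauto

lemma sum_probOf_pair {Ω S T : Type*} [Fintype Ω] [Fintype S] [Fintype T]
    [DecidableEq S] [DecidableEq T] (p : Ω → ℝ) (U : Ω → S) (V : Ω → T) (u : S) :
    ∑ v, probOf p (fun ω => (U ω, V ω)) (u, v) = probOf p U u := by
  unfold probOf
  rw [Finset.sum_comm]
  apply Finset.sum_congr rfl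
  intro ω _
  by_cases hU : U ω = u
  · simp [Prod.ext_iff, hU]
  · simp [Prod.ext_iff, hU]

end joint

lemma neg_sum_mul_log_probOf {Ω S : Type*} [Fintype Ω] [Fintype S] [DecidableEq S]
    (p : Ω → ℝ) (X : Ω → S) :
    -∑ ω, p ω * Real.log (probOf p X (X ω)) = entNat p X := by
  rw [← sum_probOf_mul p X (fun s => Real.log (probOf p X s))]
  unfold entNat
  rw [← Finset.sum_neg_distrib]
  exact Finset.sum_congr rfl fun s _ => by rw [Real.negMulLog]; ring

section main
variable {n : ℕ} {𝒳 𝒜 𝒴 𝒯 : Type*}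
    [Fintype 𝒳] [DecidableEq 𝒳] [Fintype 𝒜] [DecidableEq 𝒜] [Fintype 𝒴] [DecidableEq 𝒴]
    [Fintype 𝒯] [DecidableEq 𝒯]
    (μ : 𝒳 → ℝ) (f : (Fin n → 𝒳) → (Fin n → 𝒜)) (W : 𝒳 → 𝒜 → 𝒴 → ℝ)

lemma step1 (hμ0 : ∀ x, 0 ≤ μ x) (hμ1 : ∑ x, μ x = 1)
    (hW0 : ∀ x a y, 0 ≤ W x a y) (hW1 : ∀ x a, ∑ y, W x a y = 1) :
    ∑ ω, Real.negMulLog (jointPmf μ f W ω)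
      = ∑ i : Fin n, entNat (jointPmf μ f W) (fun ω => ω.1 i)
        + ∑ i : Fin n, (entNat (jointPmf μ f W) (fun ω => ((ω.1 i, f ω.1 i), ω.2 i))
            - entNat (jointPmf μ f W) (fun ω => (ω.1 i, f ω.1 i))) := by
  set p := jointPmf μ f W with hpdef
  have hp0 : ∀ ω, 0 ≤ p ω := jointPmf_nonneg μ f W hμ0 hW0
  have hdecomp : ∀ ω, Real.negMulLog (p ω)
      = (-∑ i : Fin n, p ω * Real.log (μ (ω.1 i)))
        - ∑ i : Fin n, p ω * Real.log (W (ω.1 i) (f ω.1 i) (ω.2 i)) := by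
    intro ω
    have key := negMulLog_prod (Finset.univ : Finset (Fin n ⊕ Fin n))
      (fun k => Sum.elim (fun i => μ (ω.1 i)) (fun i => W (ω.1 i) (f ω.1 i) (ω.2 i)) k)
    rw [Fintype.prod_sum_type, Fintype.sum_sum_type] at key
    simp only [Sum.elim_inl, Sum.elim_inr] at key
    rw [hpdef]
    unfold jointPmf
    rw [key]
    ring
  have hA : ∀ i : Fin n, -∑ ω, p ω * Real.log (μ (ω.1 i)) = entNat p (fun ω => ω.1 i) := by
    intro i
    rw [show (∑ ω, p ω * Real.log (μ (ω.1 i)))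
        = ∑ ω, p ω * Real.log (probOf p (fun ω => ω.1 i) (ω.1 i)) from
      Finset.sum_congr rfl fun ω _ => by rw [probOf_coord μ f W hμ1 hW1 i (ω.1 i)]]
    exact neg_sum_mul_log_probOf p (fun ω => ω.1 i)
  have hB : ∀ i : Fin n, -∑ ω, p ω * Real.log (W (ω.1 i) (f ω.1 i) (ω.2 i))
      = entNat p (fun ω => ((ω.1 i, f ω.1 i), ω.2 i))
        - entNat p (fun ω => (ω.1 i, f ω.1 i)) := by
    intro i
    set Z : (Fin n → 𝒳) × (Fin n → 𝒴) → (𝒳 × 𝒜) × 𝒴 :=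
      fun ω => ((ω.1 i, f ω.1 i), ω.2 i) with hZ
    set XA : (Fin n → 𝒳) × (Fin n → 𝒴) → 𝒳 × 𝒜 := fun ω => (ω.1 i, f ω.1 i) with hXA
    have e1 : ∑ ω, p ω * Real.log (W (ω.1 i) (f ω.1 i) (ω.2 i))
        = ∑ s : (𝒳 × 𝒜) × 𝒴, probOf p Z s * Real.log (W s.1.1 s.1.2 s.2) :=
      (sum_probOf_mul p Z (fun s => Real.log (W s.1.1 s.1.2 s.2))).symm
    have hPZ0 : ∀ s, 0 ≤ probOf p Z s := fun s => probOf_nonneg hp0 s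
    have hPXA0 : ∀ t, 0 ≤ probOf p XA t := fun t => probOf_nonneg hp0 t
    have e2 : ∀ s : (𝒳 × 𝒜) × 𝒴, probOf p Z s * Real.log (W s.1.1 s.1.2 s.2)
        = -(Real.negMulLog (probOf p Z s)) - probOf p Z s * Real.log (probOf p XA s.1) := by
      rintro ⟨⟨x, a⟩, y⟩
      have htr : probOf p Z ((x, a), y) = probOf p XA (x, a) * W x a y :=
        probOf_triple μ f W hW1 i x a y
      by_cases hz : probOf p Z ((x, a), y) = 0
      · simp [hz]
      · have hpos : 0 < probOf p Z ((x, a), y) := lt_of_le_of_ne (hPZ0 _) (Ne.symm hz)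
        have hXAne : probOf p XA (x, a) ≠ 0 := by
          intro hh; rw [htr, hh, zero_mul] at hz; exact hz rfl
        have hWne : W x a y ≠ 0 := by
          intro hh; rw [htr, hh, mul_zero] at hz; exact hz rfl
        have hlog : Real.log (probOf p Z ((x, a), y))
            = Real.log (probOf p XA (x, a)) + Real.log (W x a y) := by
          rw [htr, Real.log_mul hXAne hWne]
        rw [Real.negMulLog]
        dsimp only
        nlinarith [hlog]
    have e3 : ∑ s : (𝒳 × 𝒜) × 𝒴, probOf p Z s * Real.log (probOf p XA s.1)
        = ∑ t : 𝒳 × 𝒜, probOf p XA t * Real.log (probOf p XA t) := by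
      rw [sum_probOf_mul p Z (fun s => Real.log (probOf p XA s.1)),
        ← sum_probOf_mul p XA (fun t => Real.log (probOf p XA t))]
    rw [e1, Finset.sum_congr rfl fun s _ => e2 s]
    rw [Finset.sum_sub_distrib, Finset.sum_neg_distrib, e3]
    unfold entNat
    have : -∑ t : 𝒳 × 𝒜, probOf p XA t * Real.log (probOf p XA t)
        = ∑ t : 𝒳 × 𝒜, Real.negMulLog (probOf p XA t) := by
      rw [← Finset.sum_neg_distrib]
      exact Finset.sum_congr rfl fun t _ => by rw [Real.negMulLog]; ring
    linarith [this]
  calc ∑ ω, Real.negMulLog (p ω)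
      = ∑ ω, ((-∑ i : Fin n, p ω * Real.log (μ (ω.1 i)))
          - ∑ i : Fin n, p ω * Real.log (W (ω.1 i) (f ω.1 i) (ω.2 i))) :=
        Finset.sum_congr rfl fun ω _ => hdecomp ω
    _ = (∑ i : Fin n, -∑ ω, p ω * Real.log (μ (ω.1 i)))
          + ∑ i : Fin n, -∑ ω, p ω * Real.log (W (ω.1 i) (f ω.1 i) (ω.2 i)) := by
        rw [Finset.sum_sub_distrib, Finset.sum_neg_distrib,
          Finset.sum_comm (f := fun ω i => p ω * Real.log (μ (ω.1 i))),
          Finset.sum_comm (f := fun ω i => p ω * Real.log (W (ω.1 i) (f ω.1 i) (ω.2 i)))]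
        simp only [Finset.sum_neg_distrib]
        ring
    _ = _ := by
        rw [Finset.sum_congr rfl fun i _ => hA i, Finset.sum_congr rfl fun i _ => hB i]

end main

section main2
variable {n : ℕ} {𝒳 𝒜 𝒴 𝒯 : Type*}
    [Fintype 𝒳] [DecidableEq 𝒳] [Fintype 𝒜] [DecidableEq 𝒜] [Fintype 𝒴] [DecidableEq 𝒴]
    [Fintype 𝒯] [DecidableEq 𝒯]

lemma step2 (μ : 𝒳 → ℝ) (f : (Fin n → 𝒳) → (Fin n → 𝒜)) (W : 𝒳 → 𝒜 → 𝒴 → ℝ)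
    (hμ0 : ∀ x, 0 ≤ μ x) (hμ1 : ∑ x, μ x = 1)
    (hW0 : ∀ x a y, 0 ≤ W x a y) (hW1 : ∀ x a, ∑ y, W x a y = 1)
    (g : (Fin n → 𝒳) → 𝒯) (h : 𝒯 → (Fin n → 𝒜)) (hfgh : ∀ x, f x = h (g x)) :
    entNat (jointPmf μ f W) (fun ω => (ω.2, g ω.1))
      ≤ entNat (jointPmf μ f W) (fun ω => g ω.1)
        + ∑ i : Fin n, (entNat (jointPmf μ f W) (fun ω => (f ω.1 i, ω.2 i))
            - entNat (jointPmf μ f W) (fun ω => f ω.1 i)) := by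
  set p := jointPmf μ f W with hpdef
  have hp0 : ∀ ω, 0 ≤ p ω := jointPmf_nonneg μ f W hμ0 hW0
  have hp1 : ∑ ω, p ω = 1 := sum_jointPmf μ f W hμ1 hW1
  set T : (Fin n → 𝒳) × (Fin n → 𝒴) → 𝒯 := fun ω => g ω.1 with hT
  set q : (Fin n → 𝒴) × 𝒯 → ℝ := fun s =>
    probOf p T s.2 * ∏ i : Fin n,
      (probOf p (fun ω => (f ω.1 i, ω.2 i)) (h s.2 i, s.1 i)
        / probOf p (fun ω => f ω.1 i) (h s.2 i)) with hq
  have hq0 : ∀ s, 0 ≤ q s := by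
    intro s
    apply mul_nonneg (probOf_nonneg hp0 _)
    exact Finset.prod_nonneg fun i _ => div_nonneg (probOf_nonneg hp0 _) (probOf_nonneg hp0 _)
  have hq1 : ∑ s, q s ≤ 1 := by
    rw [Fintype.sum_prod_type, Finset.sum_comm]
    have hper : ∀ t : 𝒯, ∑ ys : Fin n → 𝒴, q (ys, t) ≤ probOf p T t := by
      intro t
      have e1 : ∑ ys : Fin n → 𝒴, q (ys, t) = probOf p T t * ∏ i : Fin n,
          ∑ z : 𝒴, (probOf p (fun ω => (f ω.1 i, ω.2 i)) (h t i, z)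
            / probOf p (fun ω => f ω.1 i) (h t i)) := by
        rw [hq]
        dsimp only
        rw [← Finset.mul_sum, sum_pi_prod (fun i z =>
          probOf p (fun ω => (f ω.1 i, ω.2 i)) (h t i, z)
            / probOf p (fun ω => f ω.1 i) (h t i))]
      rw [e1]
      have hfac : ∀ i : Fin n, (∑ z : 𝒴, (probOf p (fun ω => (f ω.1 i, ω.2 i)) (h t i, z)
          / probOf p (fun ω => f ω.1 i) (h t i))) ≤ 1 := by
        intro i
        rw [← Finset.sum_div, sum_probOf_pair p (fun ω => f ω.1 i) (fun ω => ω.2 i) (h t i)]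
        by_cases hz : probOf p (fun ω => f ω.1 i) (h t i) = 0
        · rw [hz]; simp
        · rw [div_self hz]
      have hfac0 : ∀ i : Fin n, 0 ≤ (∑ z : 𝒴, (probOf p (fun ω => (f ω.1 i, ω.2 i)) (h t i, z)
          / probOf p (fun ω => f ω.1 i) (h t i))) := by
        intro i
        exact Finset.sum_nonneg fun z _ => div_nonneg (probOf_nonneg hp0 _) (probOf_nonneg hp0 _)
      calc probOf p T t * ∏ i : Fin n, ∑ z : 𝒴, _ ≤ probOf p T t * 1 := by
            apply mul_le_mul_of_nonneg_left _ (probOf_nonneg hp0 _)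
            exact Finset.prod_le_one (fun i _ => hfac0 i) (fun i _ => hfac i)
        _ = probOf p T t := mul_one _
    calc ∑ t, ∑ ys : Fin n → 𝒴, q (ys, t) ≤ ∑ t, probOf p T t :=
          Finset.sum_le_sum fun t _ => hper t
      _ = ∑ ω, p ω := sum_probOf p T
      _ = 1 := hp1
  have hAeq : ∀ (ω : (Fin n → 𝒳) × (Fin n → 𝒴)) (i : Fin n), h (g ω.1) i = f ω.1 i := by
    intro ω i; rw [hfgh ω.1]
  have hpq : ∀ ω, 0 < p ω → 0 < q ((fun ω => (ω.2, g ω.1)) ω) := by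
    intro ω hpω
    rw [hq]
    dsimp only
    apply mul_pos
    · exact lt_of_lt_of_le hpω (le_probOf hp0 ω)
    · apply Finset.prod_pos
      intro i _
      rw [hAeq ω i]
      apply div_pos
      · exact lt_of_lt_of_le hpω (le_probOf hp0 (X := fun ω => (f ω.1 i, ω.2 i)) ω)
      · exact lt_of_lt_of_le hpω (le_probOf hp0 (X := fun ω => f ω.1 i) ω)
  have hgibbs := gibbs hp0 hp1 (fun ω => (ω.2, g ω.1)) q hq0 hq1 hpq
  refine hgibbs.trans (le_of_eq ?_)
  have hcross : ∀ ω, p ω * Real.log (q (ω.2, g ω.1))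
      = p ω * Real.log (probOf p T (g ω.1))
        + ∑ i : Fin n, (p ω * Real.log (probOf p (fun ω => (f ω.1 i, ω.2 i)) (f ω.1 i, ω.2 i))
            - p ω * Real.log (probOf p (fun ω => f ω.1 i) (f ω.1 i))) := by
    intro ω
    rcases lt_or_eq_of_le (hp0 ω) with hpω | hpω
    · have hTpos : 0 < probOf p T (g ω.1) := lt_of_lt_of_le hpω (le_probOf hp0 ω)
      have hAYpos : ∀ i : Fin n, 0 < probOf p (fun ω => (f ω.1 i, ω.2 i)) (f ω.1 i, ω.2 i) :=
        fun i => lt_of_lt_of_le hpω (le_probOf hp0 (X := fun ω => (f ω.1 i, ω.2 i)) ω)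
      have hApos : ∀ i : Fin n, 0 < probOf p (fun ω => f ω.1 i) (f ω.1 i) :=
        fun i => lt_of_lt_of_le hpω (le_probOf hp0 (X := fun ω => f ω.1 i) ω)
      have hqval : q (ω.2, g ω.1) = probOf p T (g ω.1) * ∏ i : Fin n,
          (probOf p (fun ω => (f ω.1 i, ω.2 i)) (f ω.1 i, ω.2 i)
            / probOf p (fun ω => f ω.1 i) (f ω.1 i)) := by
        rw [hq]
        dsimp only
        congr 1
        exact Finset.prod_congr rfl fun i _ => by rw [hAeq ω i]
      rw [hqval, Real.log_mul (ne_of_gt hTpos) (ne_of_gt (Finset.prod_pos fun i _ =>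
        div_pos (hAYpos i) (hApos i))),
        Real.log_prod (fun i _ => ne_of_gt (div_pos (hAYpos i) (hApos i)))]
      rw [Finset.sum_congr rfl fun i _ => Real.log_div (ne_of_gt (hAYpos i)) (ne_of_gt (hApos i))]
      rw [mul_add, Finset.mul_sum]
      congr 1
      exact Finset.sum_congr rfl fun i _ => by ring
    · rw [← hpω]; simp
  rw [Finset.sum_congr rfl fun ω _ => hcross ω]
  rw [Finset.sum_add_distrib, neg_add]
  congr 1
  · exact neg_sum_mul_log_probOf p T
  · rw [Finset.sum_comm]
    rw [← Finset.sum_neg_distrib]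
    apply Finset.sum_congr rfl
    intro i _
    rw [Finset.sum_sub_distrib, neg_sub]
    have e1 : -∑ ω, p ω * Real.log (probOf p (fun ω => (f ω.1 i, ω.2 i)) (f ω.1 i, ω.2 i))
        = entNat p (fun ω => (f ω.1 i, ω.2 i)) :=
      neg_sum_mul_log_probOf p (fun ω => (f ω.1 i, ω.2 i))
    have e2 : -∑ ω, p ω * Real.log (probOf p (fun ω => f ω.1 i) (f ω.1 i))
        = entNat p (fun ω => f ω.1 i) :=
      neg_sum_mul_log_probOf p (fun ω => f ω.1 i)
    linarith [e1, e2]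

end main2

lemma ent_eq_entNat {Ω S : Type*} [Fintype Ω] [Fintype S] [DecidableEq S]
    (p : Ω → ℝ) (X : Ω → S) : ent p X = entNat p X / Real.log 2 := by
  unfold ent entNat
  rw [Finset.sum_div]

section fin
variable {n : ℕ} {𝒳 𝒜 𝒴 𝒯 : Type*}
    [Fintype 𝒳] [DecidableEq 𝒳] [Fintype 𝒜] [DecidableEq 𝒜] [Fintype 𝒴] [DecidableEq 𝒴]
    [Fintype 𝒯] [DecidableEq 𝒯]

theorem aux_main (μ : 𝒳 → ℝ) (hμ0 : ∀ x, 0 ≤ μ x) (hμ1 : ∑ x, μ x = 1)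
    (f : (Fin n → 𝒳) → (Fin n → 𝒜))
    (W : 𝒳 → 𝒜 → 𝒴 → ℝ) (hW0 : ∀ x a y, 0 ≤ W x a y) (hW1 : ∀ x a, ∑ y, W x a y = 1)
    (g : (Fin n → 𝒳) → 𝒯) (h : 𝒯 → (Fin n → 𝒜)) (hfgh : ∀ x, f x = h (g x)) :
    ent (jointPmf μ f W) (fun ω => g ω.1)
        + (ent (jointPmf μ f W) (fun ω => (ω.1, (ω.2, g ω.1)))
            - ent (jointPmf μ f W) (fun ω => (ω.2, g ω.1)))
      ≥ ∑ i : Fin n,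
          (ent (jointPmf μ f W) (fun ω => ω.1 i) + ent (jointPmf μ f W) (fun ω => f ω.1 i)
            - ent (jointPmf μ f W) (fun ω => (ω.1 i, f ω.1 i))
            + (ent (jointPmf μ f W) (fun ω => (ω.1 i, (f ω.1 i, ω.2 i)))
              - ent (jointPmf μ f W) (fun ω => (f ω.1 i, ω.2 i)))) := by
  classical
  set p := jointPmf μ f W with hpdef
  have hL2 : (0:ℝ) < Real.log 2 := Real.log_pos one_lt_two
  have R1 : entNat p (fun ω => (ω.1, (ω.2, g ω.1))) = ∑ ω, Real.negMulLog (p ω) := by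
    have hinj : Function.Injective
        (fun ω : (Fin n → 𝒳) × (Fin n → 𝒴) => (ω.1, (ω.2, g ω.1))) := by
      intro a b hab
      simp only [Prod.mk.injEq] at hab
      exact Prod.ext hab.1 hab.2.1
    have hid : entNat p (fun ω : (Fin n → 𝒳) × (Fin n → 𝒴) => ω)
        = ∑ ω, Real.negMulLog (p ω) := by
      unfold entNat
      apply Finset.sum_congr rfl
      intro s _
      congr 1
      unfold probOf
      simp
    rw [← hid]
    exact entNat_comp_injective p (fun ω => ω) (fun ω => (ω.1, (ω.2, g ω.1))) hinj
  have R2 : ∀ i : Fin n, entNat p (fun ω => (ω.1 i, (f ω.1 i, ω.2 i)))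
      = entNat p (fun ω => ((ω.1 i, f ω.1 i), ω.2 i)) := by
    intro i
    have hinj : Function.Injective (fun s : (𝒳 × 𝒜) × 𝒴 => (s.1.1, (s.1.2, s.2))) := by
      rintro ⟨⟨x, a⟩, y⟩ ⟨⟨x', a'⟩, y'⟩ hab
      simp only [Prod.mk.injEq] at hab
      simp only [Prod.mk.injEq]
      tauto
    exact entNat_comp_injective p (fun ω => ((ω.1 i, f ω.1 i), ω.2 i))
      (fun s => (s.1.1, (s.1.2, s.2))) hinj
  have KEY : ∑ i : Fin n,
        (entNat p (fun ω => ω.1 i) + entNat p (fun ω => f ω.1 i)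
          - entNat p (fun ω => (ω.1 i, f ω.1 i))
          + (entNat p (fun ω => (ω.1 i, (f ω.1 i, ω.2 i)))
            - entNat p (fun ω => (f ω.1 i, ω.2 i))))
      ≤ entNat p (fun ω => g ω.1)
        + (entNat p (fun ω => (ω.1, (ω.2, g ω.1))) - entNat p (fun ω => (ω.2, g ω.1))) := by
    have s1 := step1 μ f W hμ0 hμ1 hW0 hW1
    have s2 := step2 μ f W hμ0 hμ1 hW0 hW1 g h hfgh
    rw [R1, s1]
    simp only [R2]
    simp only [Finset.sum_add_distrib, Finset.sum_sub_distrib] at s2 ⊢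
    linarith [s2]
  rw [ge_iff_le]
  have lhs_eq : ent p (fun ω => g ω.1)
      + (ent p (fun ω => (ω.1, (ω.2, g ω.1))) - ent p (fun ω => (ω.2, g ω.1)))
      = (entNat p (fun ω => g ω.1)
        + (entNat p (fun ω => (ω.1, (ω.2, g ω.1)))
          - entNat p (fun ω => (ω.2, g ω.1)))) / Real.log 2 := by
    rw [ent_eq_entNat, ent_eq_entNat, ent_eq_entNat]
    ring
  have rhs_eq : (∑ i : Fin n,
        (ent p (fun ω => ω.1 i) + ent p (fun ω => f ω.1 i)
          - ent p (fun ω => (ω.1 i, f ω.1 i))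
          + (ent p (fun ω => (ω.1 i, (f ω.1 i, ω.2 i)))
            - ent p (fun ω => (f ω.1 i, ω.2 i)))))
      = (∑ i : Fin n,
        (entNat p (fun ω => ω.1 i) + entNat p (fun ω => f ω.1 i)
          - entNat p (fun ω => (ω.1 i, f ω.1 i))
          + (entNat p (fun ω => (ω.1 i, (f ω.1 i, ω.2 i)))
            - entNat p (fun ω => (f ω.1 i, ω.2 i))))) / Real.log 2 := by
    rw [Finset.sum_div]
    apply Finset.sum_congr rfl
    intro i _
    rw [ent_eq_entNat, ent_eq_entNat, ent_eq_entNat, ent_eq_entNat, ent_eq_entNat]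
    ring
  rw [lhs_eq, rhs_eq]
  exact (div_le_div_iff_of_pos_right hL2).mpr KEY

end fin

/-- Under the memoryless action-dependent source setup, if moreover `T = g (X^n)` for a
deterministic map `g` into a finite set `𝒯` and `A^n = h T` (so `f = h ∘ g`), then
`H(T) + H(X^n | Y^n, T) ≥ ∑ i, [ I(X_i ; A_i) + H(X_i | A_i, Y_i) ]`. -/
theorem stmt_0 {n : ℕ} {𝒳 𝒜 𝒴 𝒯 : Type*}
    [Fintype 𝒳] [DecidableEq 𝒳] [Fintype 𝒜] [DecidableEq 𝒜] [Fintype 𝒴] [DecidableEq 𝒴]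
    [Fintype 𝒯] [DecidableEq 𝒯]
    (μ : 𝒳 → ℝ) (hμ0 : ∀ x, 0 ≤ μ x) (hμ1 : ∑ x, μ x = 1)
    (f : (Fin n → 𝒳) → (Fin n → 𝒜))
    (W : 𝒳 → 𝒜 → 𝒴 → ℝ) (hW0 : ∀ x a y, 0 ≤ W x a y) (hW1 : ∀ x a, ∑ y, W x a y = 1)
    (g : (Fin n → 𝒳) → 𝒯) (h : 𝒯 → (Fin n → 𝒜)) (hfgh : ∀ x, f x = h (g x)) :
    ent (jointPmf μ f W) (fun ω => g ω.1)
        + condEnt (jointPmf μ f W) (fun ω => ω.1) (fun ω => (ω.2, g ω.1))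
      ≥ ∑ i : Fin n,
          (mutInfo (jointPmf μ f W) (fun ω => ω.1 i) (fun ω => f ω.1 i)
            + condEnt (jointPmf μ f W) (fun ω => ω.1 i) (fun ω => (f ω.1 i, ω.2 i))) := by
  simp only [mutInfo, condEnt]
  exact aux_main μ hμ0 hμ1 f W hW0 hW1 g h hfgh
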